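/- For any matroid M on finite ground set N and any S ⊆ N, the maximum over subsets T ⊆ S of ⌈|T| / rank(T)⌉ equals the maximum over flats F of M of ⌈|S ∩ F| / rank(F)⌉ (where terms with rank 0 are excluded or treated as 0 when the numerator is 0). -/

import Mathlib

open Set

/-- The rank `ρ(X, M)`: the maximum size of an independent subset of `X`. -/
noncomputable def matRank {α : Type*} (M : Matroid α) (X : Set α) : ℕ :=
  sSup {n | ∃ I, I ⊆ X ∧ M.Indep I ∧ I.ncard = n}

lemma matRank_bdd {α : Type*} [Fintype α] (M : Matroid α) (X : Set α) :
    BddAbove {n | ∃ I, I ⊆ X ∧ M.Indep I ∧ I.ncard = n} := by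
  refine ⟨Fintype.card α, ?_⟩
  rintro n ⟨I, _, _, rfl⟩
  calc I.ncard ≤ (univ : Set α).ncard := ncard_le_ncard (subset_univ I) finite_univ
    _ = Fintype.card α := by rw [ncard_univ, Nat.card_eq_fintype_card]

lemma matRank_eq_of_basis' {α : Type*} [Fintype α] {M : Matroid α} {I X : Set α}
    (h : M.IsBasis' I X) : matRank M X = I.ncard := by
  refine le_antisymm (csSup_le ⟨0, ∅, empty_subset _, M.empty_indep, by simp⟩ ?_)
    (le_csSup (matRank_bdd M X) ⟨I, h.subset, h.indep, rfl⟩)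
  rintro n ⟨J, hJX, hJ, rfl⟩
  obtain ⟨J', hJ', hsub⟩ := hJ.subset_isBasis'_of_subset hJX
  have hcard : J'.encard = I.encard := hJ'.encard_eq_encard h
  calc J.ncard ≤ J'.ncard := ncard_le_ncard hsub J'.toFinite
    _ = I.ncard := by rw [Set.ncard_def, Set.ncard_def, hcard]

lemma matRank_mono {α : Type*} [Fintype α] (M : Matroid α) {X Y : Set α} (h : X ⊆ Y) :
    matRank M X ≤ matRank M Y := by
  obtain ⟨I, hI⟩ := M.exists_isBasis' X
  rw [matRank_eq_of_basis' hI]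
  exact le_csSup (matRank_bdd M Y) ⟨I, hI.subset.trans h, hI.indep, rfl⟩

lemma one_le_matRank {α : Type*} [Fintype α] {M : Matroid α} {X : Set α} {a : α}
    (ha : a ∈ X) (hind : M.Indep {a}) : 1 ≤ matRank M X :=
  le_csSup (matRank_bdd M X) ⟨{a}, singleton_subset_iff.mpr ha, hind, by simp⟩

lemma flat_closure {α : Type*} (M : Matroid α) (X : Set α) : M.IsFlat (M.closure X) := by
  rw [Matroid.closure_def]
  have hne : {F | M.IsFlat F ∧ X ∩ M.E ⊆ F}.Nonempty :=
    ⟨M.E, M.ground_isFlat, inter_subset_right⟩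
  rw [sInter_eq_iInter]
  have := hne.coe_sort
  exact Matroid.IsFlat.iInter fun F ↦ F.2.1

lemma matRank_closure {α : Type*} [Fintype α] (M : Matroid α) (X : Set α) :
    matRank M (M.closure X) = matRank M X := by
  obtain ⟨I, hI⟩ := M.exists_isBasis' X
  rw [matRank_eq_of_basis' hI, matRank_eq_of_basis' hI.isBasis_closure_right.isBasis']

/-- for a matroid `M` on a finite ground set and a nonempty loopless `S`,
the maximum of `⌈|T| / ρ(T)⌉` over nonempty `T ⊆ S` equals the maximum of
`⌈|S ∩ F| / ρ(F)⌉` over flats `F` of positive rank. -/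
theorem max_ceil_subsets_eq_max_ceil_flats {α : Type*} [Fintype α]
    (M : Matroid α) (hE : M.E = Set.univ) (S : Set α) (hS : S.Nonempty)
    (hloopless : ∀ a ∈ S, M.Indep {a}) :
    sSup {m : ℕ | ∃ T, T ⊆ S ∧ T.Nonempty ∧ m = ⌈(T.ncard : ℚ) / (matRank M T : ℚ)⌉₊} =
      sSup {m : ℕ | ∃ F, M.IsFlat F ∧ 0 < matRank M F ∧
        m = ⌈((S ∩ F).ncard : ℚ) / (matRank M F : ℚ)⌉₊} := by
  obtain ⟨a, haS⟩ := hS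
  have hbddL : BddAbove {m : ℕ | ∃ T, T ⊆ S ∧ T.Nonempty ∧
      m = ⌈(T.ncard : ℚ) / (matRank M T : ℚ)⌉₊} := by
    refine ⟨Fintype.card α, ?_⟩
    rintro m ⟨T, hTS, ⟨b, hbT⟩, rfl⟩
    have hr : 1 ≤ matRank M T := one_le_matRank hbT (hloopless b (hTS hbT))
    have : (T.ncard : ℚ) / (matRank M T : ℚ) ≤ (T.ncard : ℚ) := by
      apply div_le_self (by positivity) (by exact_mod_cast hr)
    calc ⌈(T.ncard : ℚ) / (matRank M T : ℚ)⌉₊ ≤ ⌈(T.ncard : ℚ)⌉₊ := Nat.ceil_le_ceil this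
      _ = T.ncard := Nat.ceil_natCast _
      _ ≤ (univ : Set α).ncard := ncard_le_ncard (subset_univ T) finite_univ
      _ = Fintype.card α := by rw [ncard_univ, Nat.card_eq_fintype_card]
  have hbddR : BddAbove {m : ℕ | ∃ F, M.IsFlat F ∧ 0 < matRank M F ∧
      m = ⌈((S ∩ F).ncard : ℚ) / (matRank M F : ℚ)⌉₊} := by
    refine ⟨Fintype.card α, ?_⟩
    rintro m ⟨F, _, hr, rfl⟩
    have : ((S ∩ F).ncard : ℚ) / (matRank M F : ℚ) ≤ ((S ∩ F).ncard : ℚ) := by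
      apply div_le_self (by positivity) (by exact_mod_cast hr)
    calc ⌈((S ∩ F).ncard : ℚ) / (matRank M F : ℚ)⌉₊ ≤ ⌈((S ∩ F).ncard : ℚ)⌉₊ :=
        Nat.ceil_le_ceil this
      _ = (S ∩ F).ncard := Nat.ceil_natCast _
      _ ≤ (univ : Set α).ncard := ncard_le_ncard (subset_univ _) finite_univ
      _ = Fintype.card α := by rw [ncard_univ, Nat.card_eq_fintype_card]
  have hneL : {m : ℕ | ∃ T, T ⊆ S ∧ T.Nonempty ∧
      m = ⌈(T.ncard : ℚ) / (matRank M T : ℚ)⌉₊}.Nonempty :=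
    ⟨_, {a}, singleton_subset_iff.mpr haS, singleton_nonempty a, rfl⟩
  have hneR : {m : ℕ | ∃ F, M.IsFlat F ∧ 0 < matRank M F ∧
      m = ⌈((S ∩ F).ncard : ℚ) / (matRank M F : ℚ)⌉₊}.Nonempty := by
    refine ⟨_, M.closure {a}, flat_closure M {a}, ?_, rfl⟩
    rw [matRank_closure]
    exact one_le_matRank rfl (hloopless a haS)
  apply le_antisymm
  · refine csSup_le hneL ?_
    rintro m ⟨T, hTS, ⟨b, hbT⟩, rfl⟩
    refine le_trans ?_ (le_csSup hbddR ⟨M.closure T, flat_closure M T, ?_, rfl⟩)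
    · have hsub : T ⊆ S ∩ M.closure T :=
        subset_inter hTS (M.subset_closure T (by rw [hE]; exact subset_univ T))
      have hcard : (T.ncard : ℚ) ≤ ((S ∩ M.closure T).ncard : ℚ) := by
        exact_mod_cast ncard_le_ncard hsub (toFinite _)
      rw [matRank_closure]
      apply Nat.ceil_le_ceil
      apply div_le_div_of_nonneg_right hcard
      positivity
    · rw [matRank_closure]
      exact one_le_matRank hbT (hloopless b (hTS hbT))
  · refine csSup_le hneR ?_
    rintro m ⟨F, hF, hr, rfl⟩
    rcases (S ∩ F).eq_empty_or_nonempty with hemp | ⟨b, hb⟩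
    · simp only [hemp, ncard_empty, Nat.cast_zero, zero_div, Nat.ceil_zero]
      exact Nat.zero_le _
    · have hbS : b ∈ S := hb.1
      have hTS : S ∩ F ⊆ S := inter_subset_left
      have hr1 : 1 ≤ matRank M (S ∩ F) := one_le_matRank hb (hloopless b hbS)
      refine le_trans ?_ (le_csSup hbddL ⟨S ∩ F, hTS, ⟨b, hb⟩, rfl⟩)
      apply Nat.ceil_le_ceil
      apply div_le_div_of_nonneg_left (by positivity) ?_ ?_
      · exact_mod_cast hr1
      · exact_mod_cast matRank_mono M inter_subset_right
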